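/- Fix a positive integer D. Let G be a finite simple graph with Δ(G) ≤ D and let S be a maximum clique of G² (so |S| = ω(G²)). If G is nice with respect to S, then 2·ω(G²) ≤ 5·D. -/

import Mathlib

open scoped Classical

/-- The square of a simple graph. -/
def square {V : Type*} (G : SimpleGraph V) : SimpleGraph V where
  Adj u v := u ≠ v ∧ (G.Adj u v ∨ ∃ w, G.Adj u w ∧ G.Adj w v)
  symm := by
    constructor
    rintro u v ⟨h1, h2⟩
    refine ⟨h1.symm, ?_⟩
    rcases h2 with h | ⟨w, hw1, hw2⟩
    · exact Or.inl h.symm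
    · exact Or.inr ⟨w, hw2.symm, hw1.symm⟩
  loopless := by constructor; rintro v ⟨h, -⟩; exact h rfl

/-- `G` is nice with respect to a vertex set `S`: `S` is a clique in `G²`, `S` is an
independent set in `G`, and there is a linear order of the vertices (encoded by an
injection `f : V → ℕ`) in which every vertex has at most 2 neighbors later in the
order, and the vertices of `S` appear consecutively. -/
def Nice {V : Type*} [Fintype V] (G : SimpleGraph V) (S : Finset V) : Prop :=
  (square G).IsClique (S : Set V) ∧
  ((S : Set V).Pairwise fun v w => ¬ G.Adj v w) ∧
  ∃ f : V → ℕ, Function.Injective f ∧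
    (∀ v : V, (Finset.univ.filter (fun w => G.Adj v w ∧ f v < f w)).card ≤ 2) ∧
    (∀ u v w : V, u ∈ S → w ∈ S → f u ≤ f v → f v ≤ f w → v ∈ S)

/-- If `Δ(G) ≤ D`, `S` is a maximum clique of `G²`, and `G` is nice with respect to
`S`, then `2·ω(G²) ≤ 5·D`. -/
theorem clique_square_nice {V : Type*} [Fintype V] (D : ℕ) (hD : 0 < D)
    (G : SimpleGraph V)
    (hΔ : ∀ v : V, (Finset.univ.filter (fun w => G.Adj v w)).card ≤ D)
    (S : Finset V)
    (hclique : (square G).IsClique (S : Set V))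
    (hmax : ∀ T : Finset V, (square G).IsClique (T : Set V) → T.card ≤ S.card)
    (hnice : Nice G S) :
    2 * S.card ≤ 5 * D := by
  classical
  obtain ⟨hsq, hindep, f, hf, hdeg2, hcons⟩ := hnice
  by_contra hcon
  push_neg at hcon
  set k := S.card with hk
  -- later neighbours
  set L : V → Finset V := fun v => Finset.univ.filter (fun w => G.Adj v w ∧ f v < f w)
    with hLdef
  have hmemL : ∀ v w, w ∈ L v ↔ G.Adj v w ∧ f v < f w := by
    intro v w; rw [hLdef]; simp
  have hLcard : ∀ v, (L v).card ≤ 2 := by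
    intro v; rw [hLdef]; exact hdeg2 v
  -- neighbours inside S
  set NS : V → Finset V := fun w => S.filter (fun v => G.Adj w v) with hNSdef
  have hmemNS : ∀ w v, v ∈ NS w ↔ v ∈ S ∧ G.Adj w v := by
    intro w v; rw [hNSdef]; simp
  have hNSD : ∀ w, (NS w).card ≤ D := by
    intro w
    refine le_trans (Finset.card_le_card ?_) (hΔ w)
    intro u hu
    exact Finset.mem_filter.mpr ⟨Finset.mem_univ _, ((hmemNS w u).mp hu).2⟩
  -- neighbours of S-vertices are not in S
  have hnS : ∀ v ∈ S, ∀ y, G.Adj v y → y ∉ S := by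
    intro v hv y hadj hy
    exact hindep (Finset.mem_coe.mpr hv) (Finset.mem_coe.mpr hy) hadj.ne hadj
  -- anything after one S vertex that is a later neighbour is after all of S
  have hafter : ∀ v0 ∈ S, ∀ w, w ∈ L v0 → ∀ v ∈ S, f v < f w := by
    intro v0 hv0 w hw v hv
    rw [hmemL] at hw
    by_contra hge
    push_neg at hge
    exact hnS v0 hv0 w hw.1 (hcons v0 w v hv0 hv (le_of_lt hw.2) hge)
  -- common neighbour of two S vertices
  have hcommon : ∀ v ∈ S, ∀ v' ∈ S, v ≠ v' → ∃ y, G.Adj v y ∧ G.Adj y v' := by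
    intro v hv v' hv' hne
    obtain ⟨-, h2⟩ : v ≠ v' ∧ (G.Adj v v' ∨ ∃ w, G.Adj v w ∧ G.Adj w v') :=
      hsq (Finset.mem_coe.mpr hv) (Finset.mem_coe.mpr hv') hne
    rcases h2 with h2 | h2
    · exact absurd h2 (hindep (Finset.mem_coe.mpr hv) (Finset.mem_coe.mpr hv') hne)
    · exact h2
  -- trichotomy for a common neighbour
  have htrich : ∀ v ∈ S, ∀ v' ∈ S, v ≠ v' →
      (∃ y, y ∈ L v ∧ y ∈ L v') ∨
      (∃ y, (G.Adj v y ∧ f y < f v) ∧ (G.Adj y v' ∧ f y < f v')) := by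
    intro v hv v' hv' hne
    obtain ⟨y, hy1, hy2⟩ := hcommon v hv v' hv' hne
    have hyv : y ≠ v := fun h => G.irrefl (h ▸ hy1)
    have hyv' : y ≠ v' := fun h => G.irrefl (h ▸ hy2)
    have hfv : f y ≠ f v := fun h => hyv (hf h)
    have hfv' : f y ≠ f v' := fun h => hyv' (hf h)
    have hyS : y ∉ S := hnS v hv y hy1
    rcases lt_or_gt_of_ne hfv with h1 | h1 <;> rcases lt_or_gt_of_ne hfv' with h2 | h2
    · exact Or.inr ⟨y, ⟨hy1, h1⟩, ⟨hy2, h2⟩⟩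
    · exact absurd (hcons v' y v hv' hv (le_of_lt h2) (le_of_lt h1)) hyS
    · exact absurd (hcons v y v' hv hv' (le_of_lt h1) (le_of_lt h2)) hyS
    · exact Or.inl ⟨y, (hmemL v y).mpr ⟨hy1, h1⟩, (hmemL v' y).mpr ⟨hy2.symm, h2⟩⟩
  
  -- the "before" covered partners, together with L v, inject into the neighbourhood of v
  have hBcard : ∀ v ∈ S,
      ((S.erase v).filter (fun v' => ∃ y, (G.Adj v y ∧ f y < f v) ∧ (G.Adj y v' ∧ f y < f v'))).card
        + (L v).card ≤ D := by
    intro v hv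
    set Bc := (S.erase v).filter
      (fun v' => ∃ y, (G.Adj v y ∧ f y < f v) ∧ (G.Adj y v' ∧ f y < f v')) with hBcdef
    set Nm := Finset.univ.filter (fun y => G.Adj v y ∧ f y < f v) with hNmdef
    have hinj : Bc.card ≤ Nm.card := by
      have hex : ∀ v' ∈ Bc, ∃ y, (G.Adj v y ∧ f y < f v) ∧ (G.Adj y v' ∧ f y < f v') := by
        intro v' hv'
        exact (Finset.mem_filter.mp hv').2
      refine Finset.card_le_card_of_injOn
        (fun v' => if h : ∃ y, (G.Adj v y ∧ f y < f v) ∧ (G.Adj y v' ∧ f y < f v')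
          then h.choose else v) ?_ ?_
      · intro v' hv'
        have h := hex v' hv'
        simp only [dif_pos h]
        have hspec := h.choose_spec
        rw [hNmdef]
        exact Finset.mem_filter.mpr ⟨Finset.mem_univ _, hspec.1⟩
      · intro v1 hv1 v2 hv2 heq
        simp only at heq
        by_contra hne12
        have h1 := hex v1 (Finset.mem_coe.mp hv1)
        have h2 := hex v2 (Finset.mem_coe.mp hv2)
        rw [dif_pos h1, dif_pos h2] at heq
        have hs1 := h1.choose_spec
        have hs2 := h2.choose_spec
        rw [← heq] at hs2
        set y := h1.choose with hydef
        have hvy : v ∈ L y := (hmemL y v).mpr ⟨hs1.1.1.symm, hs1.1.2⟩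
        have hv1y : v1 ∈ L y := (hmemL y v1).mpr ⟨hs1.2.1, hs1.2.2⟩
        have hv2y : v2 ∈ L y := (hmemL y v2).mpr ⟨hs2.2.1, hs2.2.2⟩
        have hvv1 : v ≠ v1 := fun h =>
          (Finset.ne_of_mem_erase (Finset.mem_of_mem_filter v1 (Finset.mem_coe.mp hv1))) h.symm
        have hvv2 : v ≠ v2 := fun h =>
          (Finset.ne_of_mem_erase (Finset.mem_of_mem_filter v2 (Finset.mem_coe.mp hv2))) h.symm
        have hsub : ({v, v1, v2} : Finset V) ⊆ L y := by
          intro z hz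
          rcases Finset.mem_insert.mp hz with rfl | hz
          · exact hvy
          rcases Finset.mem_insert.mp hz with rfl | hz
          · exact hv1y
          · rw [Finset.mem_singleton] at hz; subst hz; exact hv2y
        have hcard3 : ({v, v1, v2} : Finset V).card = 3 := by
          rw [Finset.card_insert_of_notMem (by simp [hvv1, hvv2]),
            Finset.card_insert_of_notMem (by simp [hne12]), Finset.card_singleton]
        have := Finset.card_le_card hsub
        have := hLcard y
        omega
    have hdisj : Disjoint Nm (L v) := by
      rw [Finset.disjoint_left]
      intro y hyN hyL
      rw [hNmdef] at hyN
      have h1 := (Finset.mem_filter.mp hyN).2.2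
      have h2 := ((hmemL v y).mp hyL).2
      omega
    have hsub : Nm ∪ L v ⊆ Finset.univ.filter (fun w => G.Adj v w) := by
      intro y hy
      rcases Finset.mem_union.mp hy with h | h
      · rw [hNmdef] at h
        exact Finset.mem_filter.mpr ⟨Finset.mem_univ _, (Finset.mem_filter.mp h).2.1⟩
      · exact Finset.mem_filter.mpr ⟨Finset.mem_univ _, ((hmemL v y).mp h).1⟩
    have e1 : (Nm ∪ L v).card = Nm.card + (L v).card := Finset.card_union_of_disjoint hdisj
    have e2 : (Nm ∪ L v).card ≤ D := le_trans (Finset.card_le_card hsub) (hΔ v)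
    omega
  -- basic split of S.erase v into before-covered and after-covered parts
  have hcount : ∀ v ∈ S,
      k ≤ ((S.erase v).filter
            (fun v' => ∃ y, (G.Adj v y ∧ f y < f v) ∧ (G.Adj y v' ∧ f y < f v'))).card
          + ((S.erase v).filter (fun v' => ∃ y, y ∈ L v ∧ y ∈ L v')).card + 1 := by
    intro v hv
    have hsplit : S.erase v ⊆
        ((S.erase v).filter
          (fun v' => ∃ y, (G.Adj v y ∧ f y < f v) ∧ (G.Adj y v' ∧ f y < f v')))
        ∪ ((S.erase v).filter (fun v' => ∃ y, y ∈ L v ∧ y ∈ L v')) := by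
      intro v' hv'
      have hv'S : v' ∈ S := Finset.mem_of_mem_erase hv'
      have hvne : v ≠ v' := fun h => (Finset.ne_of_mem_erase hv') h.symm
      rcases htrich v hv v' hv'S hvne with ⟨y, h⟩ | ⟨y, h⟩
      · exact Finset.mem_union_right _ (Finset.mem_filter.mpr ⟨hv', ⟨y, h⟩⟩)
      · exact Finset.mem_union_left _ (Finset.mem_filter.mpr ⟨hv', ⟨y, h⟩⟩)
    have h1 := Finset.card_erase_add_one hv
    have h2 := Finset.card_le_card hsplit
    have h3 := Finset.card_union_le
      ((S.erase v).filter
        (fun v' => ∃ y, (G.Adj v y ∧ f y < f v) ∧ (G.Adj y v' ∧ f y < f v')))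
      ((S.erase v).filter (fun v' => ∃ y, y ∈ L v ∧ y ∈ L v'))
    omega
  
  by_cases hall2 : ∀ v ∈ S, (L v).card = 2
  swap
  · -- some vertex has at most one later neighbour: k is small
    push_neg at hall2
    obtain ⟨v, hv, hneq⟩ := hall2
    have hle1 : (L v).card ≤ 1 := by have := hLcard v; omega
    have hAc : ((S.erase v).filter (fun v' => ∃ y, y ∈ L v ∧ y ∈ L v')).card
        ≤ (L v).card * D := by
      have hsub : ((S.erase v).filter (fun v' => ∃ y, y ∈ L v ∧ y ∈ L v'))
          ⊆ (L v).biUnion (fun w => NS w) := by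
        intro v' hv'
        obtain ⟨hvE, y, hy1, hy2⟩ := Finset.mem_filter.mp hv'
        exact Finset.mem_biUnion.mpr ⟨y, hy1,
          (hmemNS y v').mpr ⟨Finset.mem_of_mem_erase hvE, ((hmemL v' y).mp hy2).1.symm⟩⟩
      calc ((S.erase v).filter (fun v' => ∃ y, y ∈ L v ∧ y ∈ L v')).card
          ≤ ((L v).biUnion (fun w => NS w)).card := Finset.card_le_card hsub
        _ ≤ ∑ w ∈ L v, (NS w).card := Finset.card_biUnion_le
        _ ≤ (L v).card • D := Finset.sum_le_card_nsmul _ _ _ (fun x _ => hNSD x)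
        _ = (L v).card * D := by rw [smul_eq_mul]
    have h1 := hcount v hv
    have h2 := hBcard v hv
    have hc01 : (L v).card = 0 ∨ (L v).card = 1 := by omega
    rcases hc01 with h | h <;> rw [h] at hAc h2 <;> omega
  -- MAIN CASE: every vertex of S has exactly two later neighbours
  -- multiplicity of a hub pair
  set μp : V → V → ℕ := fun w w' => (S.filter (fun v => L v = ({w, w'} : Finset V))).card
    with hμpdef
  have hμsymm : ∀ w w', μp w w' = μp w' w := by
    intro w w'
    rw [hμpdef]
    simp only
    rw [Finset.pair_comm]
  -- the master per-vertex inequality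
  have hmaster : ∀ v ∈ S, ∀ w1 w2, w1 ≠ w2 → L v = {w1, w2} →
      k + μp w1 w2 + 2 ≤ D + (NS w1).card + (NS w2).card := by
    intro v hv w1 w2 hne hLv
    have hAc2 : ((S.erase v).filter (fun v' => ∃ y, y ∈ L v ∧ y ∈ L v')).card + 1 + μp w1 w2
        ≤ (NS w1).card + (NS w2).card := by
      set Ac := (S.erase v).filter (fun v' => ∃ y, y ∈ L v ∧ y ∈ L v') with hAcdef
      have hsub1 : insert v Ac ⊆ NS w1 ∪ NS w2 := by
        intro u hu
        rcases Finset.mem_insert.mp hu with rfl | hu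
        · have hw1 : w1 ∈ L u := by rw [hLv]; exact Finset.mem_insert_self _ _
          rw [hmemL] at hw1
          exact Finset.mem_union_left _ ((hmemNS w1 u).mpr ⟨hv, hw1.1.symm⟩)
        · obtain ⟨huE, y, hyv, hyu⟩ := Finset.mem_filter.mp hu
          have huS : u ∈ S := Finset.mem_of_mem_erase huE
          have hymem : y ∈ ({w1, w2} : Finset V) := hLv ▸ hyv
          have hadj : G.Adj y u := ((hmemL u y).mp hyu).1.symm
          rcases Finset.mem_insert.mp hymem with rfl | hy2
          · exact Finset.mem_union_left _ ((hmemNS y u).mpr ⟨huS, hadj⟩)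
          · rw [Finset.mem_singleton] at hy2
            subst hy2
            exact Finset.mem_union_right _ ((hmemNS y u).mpr ⟨huS, hadj⟩)
      have hsub2 : S.filter (fun v' => L v' = ({w1, w2} : Finset V)) ⊆ NS w1 ∩ NS w2 := by
        intro u hu
        obtain ⟨huS, hLu⟩ := Finset.mem_filter.mp hu
        have h1 : w1 ∈ L u := by rw [hLu]; exact Finset.mem_insert_self _ _
        have h2 : w2 ∈ L u := by rw [hLu]; simp
        rw [hmemL] at h1 h2
        exact Finset.mem_inter.mpr ⟨(hmemNS w1 u).mpr ⟨huS, h1.1.symm⟩,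
          (hmemNS w2 u).mpr ⟨huS, h2.1.symm⟩⟩
      have hvAc : v ∉ Ac := fun h => (Finset.notMem_erase v S) (Finset.mem_of_mem_filter v h)
      have e1 : (insert v Ac).card = Ac.card + 1 := Finset.card_insert_of_notMem hvAc
      have e2 : (insert v Ac).card ≤ (NS w1 ∪ NS w2).card := Finset.card_le_card hsub1
      have e3 : μp w1 w2 ≤ (NS w1 ∩ NS w2).card := by
        rw [hμpdef]
        exact Finset.card_le_card hsub2
      have e4 := Finset.card_union_add_card_inter (NS w1) (NS w2)
      omega
    have h1 := hcount v hv
    have h2 := hBcard v hv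
    have h3 : (L v).card = 2 := hall2 v hv
    omega
  
  -- the set of hubs
  set W : Finset V := S.biUnion (fun v => L v) with hWdef
  have hmemW : ∀ x, x ∈ W ↔ ∃ v ∈ S, x ∈ L v := by
    intro x; rw [hWdef]; exact Finset.mem_biUnion
  -- any hub adjacent to an S-vertex is a later neighbour of it
  have hadjL : ∀ w ∈ W, ∀ v ∈ S, G.Adj w v → w ∈ L v := by
    intro w hw v hv hadj
    obtain ⟨v0, hv0, hwL⟩ := (hmemW w).mp hw
    exact (hmemL v w).mpr ⟨hadj.symm, hafter v0 hv0 w hwL v hv⟩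
  have hfilterW : ∀ v ∈ S, W.filter (fun w => G.Adj w v) = L v := by
    intro v hv
    ext w
    constructor
    · intro hw
      obtain ⟨hwW, hadj⟩ := Finset.mem_filter.mp hw
      exact hadjL w hwW v hv hadj
    · intro hw
      refine Finset.mem_filter.mpr ⟨(hmemW w).mpr ⟨v, hv, hw⟩, ((hmemL v w).mp hw).1.symm⟩
  -- the degree sum over hubs
  have hNSfilter : ∀ w ∈ W, ∀ v, v ∈ NS w ↔ v ∈ S ∧ w ∈ L v := by
    intro w hw v
    rw [hmemNS]
    constructor
    · rintro ⟨h1, h2⟩; exact ⟨h1, hadjL w hw v h1 h2⟩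
    · rintro ⟨h1, h2⟩; exact ⟨h1, ((hmemL v w).mp h2).1.symm⟩
  have hsum2k : ∑ w ∈ W, (NS w).card = 2 * k := by
    calc ∑ w ∈ W, (NS w).card
        = ∑ w ∈ W, ∑ v ∈ S, if G.Adj w v then 1 else 0 := by
          refine Finset.sum_congr rfl (fun w _ => ?_)
          rw [hNSdef]
          exact Finset.card_filter _ _
      _ = ∑ v ∈ S, ∑ w ∈ W, if G.Adj w v then 1 else 0 := Finset.sum_comm
      _ = ∑ v ∈ S, (W.filter (fun w => G.Adj w v)).card := by
          refine Finset.sum_congr rfl (fun v _ => ?_)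
          exact (Finset.card_filter _ _).symm
      _ = ∑ v ∈ S, (L v).card := Finset.sum_congr rfl (fun v hv => by rw [hfilterW v hv])
      _ = ∑ v ∈ S, 2 := Finset.sum_congr rfl (fun v hv => hall2 v hv)
      _ = 2 * k := by rw [Finset.sum_const, smul_eq_mul, hk, mul_comm]
  -- k is at most 3D - 3, hence D ≥ 7
  have hSne : S.Nonempty := Finset.card_pos.mp (by omega)
  have hk3D : k + 3 ≤ 3 * D := by
    obtain ⟨v, hv⟩ := hSne
    obtain ⟨w1, w2, hne, hLv⟩ := Finset.card_eq_two.mp (hall2 v hv)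
    have hm := hmaster v hv w1 w2 hne hLv
    have hμ : 1 ≤ μp w1 w2 := by
      rw [hμpdef]
      exact Finset.card_pos.mpr ⟨v, Finset.mem_filter.mpr ⟨hv, hLv⟩⟩
    have := hNSD w1
    have := hNSD w2
    omega
  have hD7 : 7 ≤ D := by omega
  -- every hub has many S-neighbours
  have hdm : ∀ w ∈ W, k + 3 ≤ (NS w).card + 2 * D := by
    intro w hw
    obtain ⟨v, hv, hwL⟩ := (hmemW w).mp hw
    obtain ⟨w1, w2, hne, hLv⟩ := Finset.card_eq_two.mp (hall2 v hv)
    have hm := hmaster v hv w1 w2 hne hLv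
    have hμ : 1 ≤ μp w1 w2 := by
      rw [hμpdef]
      exact Finset.card_pos.mpr ⟨v, Finset.mem_filter.mpr ⟨hv, hLv⟩⟩
    have hw12 : w = w1 ∨ w = w2 := by
      rw [hLv] at hwL
      simpa using hwL
    have h1 := hNSD w1
    have h2 := hNSD w2
    rcases hw12 with rfl | rfl <;> omega
  -- at least six hubs
  have hW6 : 6 ≤ W.card := by
    by_contra h6
    push_neg at h6
    have h1 : ∑ w ∈ W, (NS w).card ≤ W.card • D :=
      Finset.sum_le_card_nsmul _ _ _ (fun x _ => hNSD x)
    rw [hsum2k, smul_eq_mul] at h1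
    have h2 : W.card * D ≤ 5 * D := Nat.mul_le_mul_right D (by omega)
    omega
  
  -- pair inequality from an inhabited pair
  have hpair : ∀ w w', w ≠ w' → 0 < μp w w' →
      k + 2 + μp w w' ≤ D + (NS w).card + (NS w').card := by
    intro w w' hne hpos
    have hpos' : 0 < (S.filter (fun v => L v = ({w, w'} : Finset V))).card := by
      rw [hμpdef] at hpos; exact hpos
    obtain ⟨v, hv⟩ := Finset.card_pos.mp hpos'
    obtain ⟨hvS, hLv⟩ := Finset.mem_filter.mp hv
    have := hmaster v hvS w w' hne hLv
    omega
  -- decomposition of the S-neighbours of a hub by the other hub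
  have hdcard : ∀ w ∈ W, (NS w).card = ∑ w' ∈ W.erase w, μp w w' := by
    intro w hw
    have hdisj : ∀ x ∈ W.erase w, ∀ y ∈ W.erase w, x ≠ y →
        Disjoint (S.filter (fun v => L v = ({w, x} : Finset V)))
          (S.filter (fun v => L v = ({w, y} : Finset V))) := by
      intro x hx y hy hxy
      rw [Finset.disjoint_left]
      intro v h1 h2
      have e1 := (Finset.mem_filter.mp h1).2
      have e2 := (Finset.mem_filter.mp h2).2
      apply hxy
      have hxmem : x ∈ ({w, y} : Finset V) := by
        rw [← e2, e1]
        simp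
      rcases Finset.mem_insert.mp hxmem with h | h
      · exact absurd h (Finset.ne_of_mem_erase hx)
      · simpa using h
    have hset : NS w = (W.erase w).biUnion
        (fun w' => S.filter (fun v => L v = ({w, w'} : Finset V))) := by
      ext v
      constructor
      · intro hv
        obtain ⟨hvS, hwL⟩ := (hNSfilter w hw v).mp hv
        obtain ⟨a, b, hab, hLv⟩ := Finset.card_eq_two.mp (hall2 v hvS)
        have hwab : w = a ∨ w = b := by
          rw [hLv] at hwL
          simpa using hwL
        have haW : a ∈ W := (hmemW a).mpr ⟨v, hvS, by rw [hLv]; simp⟩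
        have hbW : b ∈ W := (hmemW b).mpr ⟨v, hvS, by rw [hLv]; simp⟩
        rcases hwab with rfl | rfl
        · exact Finset.mem_biUnion.mpr ⟨b, Finset.mem_erase.mpr ⟨hab.symm, hbW⟩,
            Finset.mem_filter.mpr ⟨hvS, hLv⟩⟩
        · exact Finset.mem_biUnion.mpr ⟨a, Finset.mem_erase.mpr ⟨hab, haW⟩,
            Finset.mem_filter.mpr ⟨hvS, by rw [hLv, Finset.pair_comm]⟩⟩
      · intro hv
        obtain ⟨w', hw', hvf⟩ := Finset.mem_biUnion.mp hv
        obtain ⟨hvS, hLv⟩ := Finset.mem_filter.mp hvf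
        have hwL : w ∈ L v := by rw [hLv]; simp
        exact (hmemNS w v).mpr ⟨hvS, ((hmemL v w).mp hwL).1.symm⟩
    rw [hset, Finset.card_biUnion hdisj]
  -- partners of a hub
  set T : V → Finset V := fun w => (W.erase w).filter (fun w' => μp w w' ≠ 0) with hTdef
  have hdT : ∀ w ∈ W, (NS w).card = ∑ w' ∈ T w, μp w w' := by
    intro w hw
    rw [hdcard w hw, hTdef]
    exact (Finset.sum_filter_ne_zero _).symm
  have hTsub : ∀ w, T w ⊆ W.erase w := by
    intro w
    rw [hTdef]
    exact Finset.filter_subset _ _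
  -- key summed inequality for any hub
  have hkey1 : ∀ w ∈ W, (T w).card * (k + 2) + (NS w).card
      ≤ (T w).card * (D + (NS w).card) + ∑ w' ∈ T w, (NS w').card := by
    intro w hw
    have hsum : ∑ w' ∈ T w, ((k + 2) + μp w w')
        ≤ ∑ w' ∈ T w, ((D + (NS w).card) + (NS w').card) := by
      refine Finset.sum_le_sum ?_
      intro w' hw'
      have hw'E : w' ∈ W.erase w := hTsub w hw'
      have hne : w ≠ w' := fun h => (Finset.ne_of_mem_erase hw'E) h.symm
      have hpos : 0 < μp w w' := by
        have := (Finset.mem_filter.mp (by rw [hTdef] at hw'; exact hw')).2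
        omega
      have := hpair w w' hne hpos
      omega
    have hL : ∑ w' ∈ T w, ((k + 2) + μp w w') = (T w).card * (k + 2) + (NS w).card := by
      rw [Finset.sum_add_distrib, Finset.sum_const, smul_eq_mul, ← hdT w hw]
    have hR : ∑ w' ∈ T w, ((D + (NS w).card) + (NS w').card)
        = (T w).card * (D + (NS w).card) + ∑ w' ∈ T w, (NS w').card := by
      rw [Finset.sum_add_distrib, Finset.sum_const, smul_eq_mul]
    rw [hL, hR] at hsum
    exact hsum
  -- every hub has at least two partners
  have ht2 : ∀ w ∈ W, 2 ≤ (T w).card := by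
    intro w hw
    by_contra h
    push_neg at h
    have h01 : (T w).card = 0 ∨ (T w).card = 1 := by omega
    rcases h01 with h0 | h1
    · have hTe : T w = ∅ := Finset.card_eq_zero.mp h0
      have := hdT w hw
      rw [hTe, Finset.sum_empty] at this
      have := hdm w hw
      omega
    · obtain ⟨w', hTw⟩ := Finset.card_eq_one.mp h1
      have hw'T : w' ∈ T w := by rw [hTw]; exact Finset.mem_singleton_self _
      have hd : (NS w).card = μp w w' := by
        rw [hdT w hw, hTw, Finset.sum_singleton]
      have hw'E : w' ∈ W.erase w := hTsub w hw'T
      have hne : w ≠ w' := fun h => (Finset.ne_of_mem_erase hw'E) h.symm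
      have hpos : 0 < μp w w' := by
        have := (Finset.mem_filter.mp (by rw [hTdef] at hw'T; exact hw'T)).2
        omega
      have hp := hpair w w' hne hpos
      have := hNSD w'
      omega
  
  -- at most six hubs
  have hW7 : W.card ≤ 6 := by
    by_contra h7
    push_neg at h7
    obtain ⟨w, hw⟩ : W.Nonempty := Finset.card_pos.mp (by omega)
    set R : Finset V := (W.erase w).filter (fun w' => ¬ μp w w' ≠ 0) with hRdef
    have hc1 := hkey1 w hw
    have hc2 : (NS w).card + ∑ w' ∈ W.erase w, (NS w').card = 2 * k := by
      rw [← hsum2k]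
      exact Finset.add_sum_erase W (fun w' => (NS w').card) hw
    have hc3 : ∑ w' ∈ T w, (NS w').card + ∑ w' ∈ R, (NS w').card
        = ∑ w' ∈ W.erase w, (NS w').card := by
      simp only [hTdef, hRdef]
      exact Finset.sum_filter_add_sum_filter_not _ _ _
    have hc4 : R.card * (k + 3) ≤ (∑ w' ∈ R, (NS w').card) + R.card * (2 * D) := by
      have hsum : ∑ _w' ∈ R, (k + 3) ≤ ∑ w' ∈ R, ((NS w').card + 2 * D) := by
        refine Finset.sum_le_sum ?_
        intro x hx
        have hxE : x ∈ W.erase w := by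
          rw [hRdef] at hx
          exact Finset.mem_of_mem_filter x hx
        exact hdm x (Finset.mem_of_mem_erase hxE)
      rw [Finset.sum_const, smul_eq_mul, Finset.sum_add_distrib, Finset.sum_const,
        smul_eq_mul] at hsum
      exact hsum
    have hc5 : (T w).card + R.card = (W.erase w).card := by
      simp only [hTdef, hRdef]
      exact Finset.card_filter_add_card_filter_not _
    have hc6 : (W.erase w).card + 1 = W.card := Finset.card_erase_add_one hw
    have ht2w := ht2 w hw
    have hdwD := hNSD w
    -- pass to integers
    have H1 : ((T w).card : ℤ) * ((k : ℤ) + 2) + ((NS w).card : ℤ)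
        ≤ ((T w).card : ℤ) * ((D : ℤ) + ((NS w).card : ℤ)) + ((∑ w' ∈ T w, (NS w').card : ℕ) : ℤ) := by
      exact_mod_cast hc1
    have H2 : ((NS w).card : ℤ) + (((∑ w' ∈ T w, (NS w').card : ℕ) : ℤ)
        + ((∑ w' ∈ R, (NS w').card : ℕ) : ℤ)) = 2 * (k : ℤ) := by
      have h := hc2
      rw [← hc3] at h
      exact_mod_cast h
    have H4 : ((R.card : ℤ)) * ((k : ℤ) + 3)
        ≤ ((∑ w' ∈ R, (NS w').card : ℕ) : ℤ) + (R.card : ℤ) * (2 * (D : ℤ)) := by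
      exact_mod_cast hc4
    have H5 : ((T w).card : ℤ) + (R.card : ℤ) + 1 = (W.card : ℤ) := by
      have h := hc6
      rw [← hc5] at h
      exact_mod_cast h
    have H7 : (7 : ℤ) ≤ (W.card : ℤ) := by exact_mod_cast h7
    have Ht2 : (2 : ℤ) ≤ ((T w).card : ℤ) := by exact_mod_cast ht2w
    have HdwD : ((NS w).card : ℤ) ≤ (D : ℤ) := by exact_mod_cast hdwD
    have Hcon : 5 * (D : ℤ) + 1 ≤ 2 * (k : ℤ) := by exact_mod_cast hcon
    have Hb0 : (0 : ℤ) ≤ (R.card : ℤ) := Int.natCast_nonneg _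
    have five : (0 : ℤ) ≤ (((T w).card : ℤ) - 2) * ((D : ℤ) - ((NS w).card : ℤ)) :=
      mul_nonneg (by linarith) (by linarith)
    have six : (0 : ℤ) ≤ (((T w).card : ℤ) + (R.card : ℤ) - 6) * (2 * (k : ℤ) + 4 - 4 * (D : ℤ)) :=
      mul_nonneg (by linarith) (by linarith)
    nlinarith [five, six, H1, H2, H4, Hcon, Hb0]
  
  -- exactly six hubs; take the hub of minimum S-degree
  have hWcard : W.card = 6 := le_antisymm hW7 hW6
  obtain ⟨s, hsW, hmin⟩ := Finset.exists_min_image W (fun w => (NS w).card)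
    (Finset.card_pos.mp (by omega))
  set R : Finset V := (W.erase s).filter (fun w' => ¬ μp s w' ≠ 0) with hRdef
  have hG1 := hkey1 s hsW
  have hsubT : ∑ w' ∈ T s, (NS w').card ≤ (T s).card * D := by
    have := Finset.sum_le_card_nsmul (T s) (fun w' => (NS w').card) D (fun x _ => hNSD x)
    rwa [smul_eq_mul] at this
  have hc2 : (NS s).card + ∑ w' ∈ W.erase s, (NS w').card = 2 * k := by
    rw [← hsum2k]
    exact Finset.add_sum_erase W (fun w' => (NS w').card) hsW
  have hc3 : ∑ w' ∈ T s, (NS w').card + ∑ w' ∈ R, (NS w').card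
      = ∑ w' ∈ W.erase s, (NS w').card := by
    simp only [hTdef, hRdef]
    exact Finset.sum_filter_add_sum_filter_not _ _ _
  have hc5 : (T s).card + R.card = 5 := by
    have h1 : (T s).card + R.card = (W.erase s).card := by
      simp only [hTdef, hRdef]
      exact Finset.card_filter_add_card_filter_not _
    have h2 := Finset.card_erase_add_one hsW
    omega
  have hRge : R.card * (NS s).card ≤ ∑ w' ∈ R, (NS w').card := by
    have := Finset.card_nsmul_le_sum R (fun w' => (NS w').card) ((NS s).card) ?_
    · rwa [smul_eq_mul] at this
    · intro x hx
      have hxE : x ∈ W.erase s := by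
        rw [hRdef] at hx
        exact Finset.mem_of_mem_filter x hx
      exact hmin x (Finset.mem_of_mem_erase hxE)
  have h6ds : 6 * (NS s).card ≤ 2 * k := by
    have := Finset.card_nsmul_le_sum W (fun w => (NS w).card) ((NS s).card)
      (fun x hx => hmin x hx)
    rwa [smul_eq_mul, hsum2k, hWcard] at this
  have hGm := hdm s hsW
  have hdsD := hNSD s
  have hsplit : (T s).card = 0 ∨ (T s).card = 1 ∨ (T s).card = 2 ∨ (T s).card = 3 ∨
      (T s).card = 4 ∨ (T s).card = 5 := by omega
  rcases hsplit with h | h | h | h | h | h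
  · rw [h] at hG1 hsubT
    omega
  · rw [h] at hG1 hsubT
    omega
  · rw [h] at hG1 hsubT
    omega
  · rw [h] at hG1 hc5
    have hR2 : R.card = 2 := by omega
    rw [hR2] at hRge
    omega
  · rw [h] at hG1 hc5
    have hR1 : R.card = 1 := by omega
    rw [hR1] at hRge
    omega
  · rw [h] at hG1 hc5
    omega
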